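/- Let T_m denote the number of game walks of length m. Then T_m = o(5^{m/2}) as m → ∞; that is, the quotient T_m / 5^{m/2} tends to 0 as m tends to infinity (in particular, T_{2M}/5^M → 0 as M → ∞). -/

import Mathlib

open Finset

private lemma prod_zpow_sum (x : ℝ) (hx : x ≠ 0) {n : ℕ} (f : Fin n → ℤ) :
    ∏ i, x ^ (f i) = x ^ (∑ i, f i) := by
  induction n with
  | zero => simp
  | succ n ih =>
    rw [Fin.prod_univ_succ, Fin.sum_univ_succ, zpow_add₀ hx, ih (fun i => f i.succ)]

private lemma list_sum_le_length (l : List ℤ) (h : ∀ x ∈ l, x ≤ 1) :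
    l.sum ≤ l.length := by
  induction l with
  | nil => simp
  | cons a t ih =>
    simp only [List.sum_cons, List.length_cons]
    have ha := h a (by simp)
    have ht := ih (fun x hx => h x (by simp [hx]))
    push_cast
    omega

/-- A game walk: a finite sequence of integers each equal to `1` or at most
`-3`, all of whose partial sums are at least `1`, and whose total sum is `1`. -/
def IsGameWalk (D : List ℤ) : Prop :=
  (∀ d ∈ D, d = 1 ∨ d ≤ -3) ∧
  (∀ k, 1 ≤ k → k ≤ D.length → 1 ≤ (D.take k).sum) ∧
  D.sum = 1

/-- `T m` is the number of game walks of length `m`. -/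
noncomputable def T (m : ℕ) : ℕ :=
  Nat.card {D : List ℤ // D.length = m ∧ IsGameWalk D}

/-- Any element of a game walk of length `m` is at least `2 - m`. -/
private lemma mem_ge (D : List ℤ) (hW : IsGameWalk D) {d : ℤ} (hd : d ∈ D) :
    2 - (D.length : ℤ) ≤ d := by
  obtain ⟨s, t, rfl⟩ := List.append_of_mem hd
  have hs := list_sum_le_length s (fun x hx => by
    rcases hW.1 x (by simp [hx]) with h | h <;> omega)
  have ht := list_sum_le_length t (fun x hx => by
    rcases hW.1 x (by simp [hx]) with h | h <;> omega)
  have hsum := hW.2.2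
  simp only [List.sum_append, List.sum_cons, List.length_append, List.length_cons] at hsum ⊢
  push_cast
  omega

private lemma T_le (m : ℕ) : (T m : ℝ) ≤ (219/100 : ℝ) ^ m := by
  classical
  set q : ℝ := 5/9 with hq
  have hq0 : (0:ℝ) < q := by norm_num [hq]
  have hqne : q ≠ 0 := ne_of_gt hq0
  set S : Finset ℤ := insert 1 ((Finset.Icc 3 m).image fun k : ℕ => -(k : ℤ)) with hS
  set W : Finset (Fin m → ℤ) :=
    (Fintype.piFinset fun _ : Fin m => S).filter (fun f => (∑ i, f i) = 1) with hWdef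
  -- Step 1 : T m ≤ W.card
  have step1 : (T m : ℕ) ≤ W.card := by
    rw [← Nat.card_eq_finsetCard]
    refine Nat.card_le_card_of_injective
      (fun D => ⟨fun i => D.1.get ⟨i.1, by rw [D.2.1]; exact i.2⟩, ?_⟩) ?_
    · obtain ⟨D, hlen, hW⟩ := D
      have hofn : List.ofFn (fun i : Fin m => D.get ⟨i.1, by rw [hlen]; exact i.2⟩) = D := by
        apply List.ext_get (by simp [hlen])
        intro n h1 h2
        simp
      have key : ∀ d ∈ D, d ∈ S := by
        intro d hd
        rcases hW.1 d hd with h | h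
        · rw [hS]; simp [h]
        · have hge := mem_ge D hW hd
          rw [hS, Finset.mem_insert]
          right
          rw [Finset.mem_image]
          refine ⟨d.natAbs, ?_, ?_⟩
          · rw [Finset.mem_Icc]; omega
          · omega
      rw [hWdef, Finset.mem_filter]
      constructor
      · rw [Fintype.mem_piFinset]
        intro i
        exact key _ (List.get_mem _ _)
      · have : ∑ i, (fun i : Fin m => D.get ⟨i.1, by rw [hlen]; exact i.2⟩) i
            = D.sum := by rw [← List.sum_ofFn, hofn]
        rw [this, hW.2.2]
    · intro ⟨D1, h1, hw1⟩ ⟨D2, h2, hw2⟩ hEq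
      simp only [Subtype.mk.injEq] at hEq ⊢
      apply List.ext_get (by rw [h1, h2])
      intro n hn1 hn2
      have := congrFun hEq ⟨n, by rw [← h1]; exact hn1⟩
      simpa using this
  -- Step 2-4 : weighted counting
  have hterm : ∀ f ∈ W, (1:ℝ) ≤ ∏ i, q ^ (-(f i)) := by
    intro f hf
    rw [hWdef, Finset.mem_filter] at hf
    have : ∏ i, q ^ (-(f i)) = q ^ (-∑ i, f i) := by
      rw [prod_zpow_sum q hqne, ← Finset.sum_neg_distrib]
    rw [this, hf.2]
    norm_num [hq]
  have step2 : (W.card : ℝ) ≤ ∑ f ∈ W, ∏ i, q ^ (-(f i)) := by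
    calc (W.card : ℝ) = ∑ _f ∈ W, (1:ℝ) := by simp
    _ ≤ _ := Finset.sum_le_sum hterm
  have step3 : ∑ f ∈ W, ∏ i, q ^ (-(f i))
      ≤ ∑ f ∈ Fintype.piFinset (fun _ : Fin m => S), ∏ i, q ^ (-(f i)) := by
    apply Finset.sum_le_sum_of_subset_of_nonneg (Finset.filter_subset _ _)
    intro f _ _
    exact Finset.prod_nonneg fun i _ => zpow_nonneg (le_of_lt hq0) _
  have step4 : ∑ f ∈ Fintype.piFinset (fun _ : Fin m => S), ∏ i, q ^ (-(f i))
      = (∑ d ∈ S, q ^ (-d)) ^ m := by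
    rw [← Finset.prod_univ_sum (fun _ : Fin m => S) (fun _ d => q ^ (-d))]
    simp
  -- Step 5 : the single-step sum is at most 219/100
  have step5 : ∑ d ∈ S, q ^ (-d) ≤ 219/100 := by
    rw [hS]
    have hnotmem : (1:ℤ) ∉ (Finset.Icc 3 m).image fun k : ℕ => -(k : ℤ) := by
      simp only [Finset.mem_image, Finset.mem_Icc]
      rintro ⟨k, ⟨hk3, _⟩, hk⟩
      omega
    rw [Finset.sum_insert hnotmem]
    have himg : ∑ d ∈ (Finset.Icc 3 m).image (fun k : ℕ => -(k : ℤ)), q ^ (-d)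
        = ∑ k ∈ Finset.Icc 3 m, q ^ (k : ℕ) := by
      rw [Finset.sum_image (by intro a _ b _ h; have h' : -(a:ℤ) = -(b:ℤ) := h; omega)]
      apply Finset.sum_congr rfl
      intro k _
      rw [neg_neg, zpow_natCast]
    rw [himg]
    have hgeom : ∑ k ∈ Finset.Icc 3 m, q ^ k ≤ 39/100 := by
      have : Finset.Icc 3 m = Finset.Ico 3 (m+1) := by
        rw [Finset.Ico_add_one_right_eq_Icc]
      rw [this, Finset.sum_Ico_eq_sum_range]
      have : ∑ i ∈ Finset.range (m + 1 - 3), q ^ (3 + i)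
          = q ^ 3 * ∑ i ∈ Finset.range (m + 1 - 3), q ^ i := by
        rw [Finset.mul_sum]
        apply Finset.sum_congr rfl
        intro i _
        rw [pow_add]
      rw [this, geom_sum_eq (by norm_num [hq])]
      have hqn : (0:ℝ) ≤ q ^ (m + 1 - 3) := pow_nonneg (le_of_lt hq0) _
      have hq1 : q ^ (m + 1 - 3) ≤ 1 := pow_le_one₀ (le_of_lt hq0) (by norm_num [hq])
      set x : ℝ := q ^ (m + 1 - 3)
      have hexp : q ^ 3 * ((x - 1) / (q - 1)) = (125/729) * ((1 - x) * (9/4)) := by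
        rw [hq]; ring
      rw [hexp]
      nlinarith [hqn, hq1]
    have h1 : q ^ (-(1:ℤ)) = 9/5 := by norm_num [hq]
    rw [h1]
    linarith
  have hsum_nonneg : (0:ℝ) ≤ ∑ d ∈ S, q ^ (-d) :=
    Finset.sum_nonneg fun d _ => zpow_nonneg (le_of_lt hq0) _
  calc (T m : ℝ) ≤ (W.card : ℝ) := by exact_mod_cast step1
  _ ≤ (∑ d ∈ S, q ^ (-d)) ^ m := by rw [← step4]; exact le_trans step2 step3
  _ ≤ (219/100 : ℝ) ^ m := pow_le_pow_left₀ hsum_nonneg step5 m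

/-- `T m = o(5^(m/2))` as `m → ∞`: the quotient `T m / 5^(m/2)` tends to `0`. -/
theorem gameWalk_count_little_o :
    Filter.Tendsto (fun m : ℕ => (T m : ℝ) / (5 : ℝ) ^ ((m : ℝ) / 2))
      Filter.atTop (nhds 0) := by
  have hs5 : (0:ℝ) < Real.sqrt 5 := Real.sqrt_pos.mpr (by norm_num)
  have hlt : (219/100 : ℝ) < Real.sqrt 5 := by
    rw [show (219/100 : ℝ) = 2.19 by norm_num]
    rw [show Real.sqrt 5 = √5 from rfl]
    have : (2.19 : ℝ) ^ 2 < 5 := by norm_num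
    exact (Real.lt_sqrt (by norm_num)).mpr this
  set r : ℝ := (219/100) / Real.sqrt 5 with hr
  have hr0 : 0 ≤ r := div_nonneg (by norm_num) (le_of_lt hs5)
  have hr1 : r < 1 := (div_lt_one hs5).mpr hlt
  have hpow5 : ∀ m : ℕ, (5:ℝ) ^ ((m:ℝ)/2) = (Real.sqrt 5) ^ m := by
    intro m
    rw [Real.sqrt_eq_rpow, ← Real.rpow_natCast ((5:ℝ) ^ ((1:ℝ)/2)) m,
      ← Real.rpow_mul (by norm_num)]
    ring_nf
  apply squeeze_zero (fun m => div_nonneg (Nat.cast_nonneg _)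
      (Real.rpow_nonneg (by norm_num) _))
    (g := fun m => r ^ m)
  · intro m
    rw [hpow5 m, hr, div_pow]
    gcongr
    exact T_le m
  · exact tendsto_pow_atTop_nhds_zero_of_lt_one hr0 hr1
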